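/- For the simple random walk on a locally finite graph, by reversibility: P_v(X_s = u, τ_v ≥ s) = (d_u / d_v) P_u(τ_v = s) for all vertices u ≠ v and integers s ≥ 1, and consequently P_v(τ_v = t) = (1/d_v) ∑_{u ≠ v} d_u P_u(τ_v = ⌈t/2⌉) P_u(τ_v = ⌊t/2⌋) for t ≥ 2. -/

import Mathlib

open scoped BigOperators

namespace RW

attribute [local instance] Classical.propDecidable

variable {V : Type*}

/-- Degree of a vertex (as a natural number, via `Nat.card`). -/
noncomputable def deg (G : SimpleGraph V) (x : V) : ℕ := Nat.card (G.neighborSet x)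

/-- Local finiteness of a graph. -/
def LocFin (G : SimpleGraph V) : Prop := ∀ x, (G.neighborSet x).Finite

/-- Probability of the simple random walk following the trajectory `p`. -/
noncomputable def pathProb (G : SimpleGraph V) {t : ℕ} (p : Fin (t + 1) → V) : ℝ :=
  if ∀ i : Fin t, G.Adj (p i.castSucc) (p i.succ)
  then ∏ i : Fin t, ((deg G (p i.castSucc) : ℝ))⁻¹ else 0

/-- `hitProb G u v t` is the probability that the simple random walk started at `u`
hits `v` for the first time (at a time `≥ 1`) exactly at time `t`. -/
noncomputable def hitProb (G : SimpleGraph V) (u v : V) (t : ℕ) : ℝ :=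
  ∑' p : Fin (t + 1) → V,
    if p 0 = u ∧ p (Fin.last t) = v ∧
        (∀ i : Fin (t + 1), i ≠ 0 → i ≠ Fin.last t → p i ≠ v)
    then pathProb G p else 0

/-- `survProb G u v t` is the probability that the walk started at `u` has not
hit `v` before time `t`, i.e. `P_u(τ_v ≥ t)` (for `t ≥ 1`). -/
noncomputable def survProb (G : SimpleGraph V) (u v : V) (t : ℕ) : ℝ :=
  1 - ∑ s ∈ Finset.Ico 1 t, hitProb G u v s
/-- `visitProb G v u s` is `P_v(X_s = u, τ_v ≥ s)`. -/
noncomputable def visitProb (G : SimpleGraph V) (v u : V) (s : ℕ) : ℝ :=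
  ∑' p : Fin (s + 1) → V,
    if p 0 = v ∧ p (Fin.last s) = u ∧
        (∀ i : Fin (s + 1), i ≠ 0 → i ≠ Fin.last s → p i ≠ v)
    then pathProb G p else 0

/-- Generic path-sum summand. -/
noncomputable def Ffun (G : SimpleGraph V) (a b v : V) (t : ℕ) (p : Fin (t + 1) → V) : ℝ :=
  if p 0 = a ∧ p (Fin.last t) = b ∧
      (∀ i : Fin (t + 1), i ≠ 0 → i ≠ Fin.last t → p i ≠ v)
  then pathProb G p else 0

lemma deg_pos {G : SimpleGraph V} (hloc : LocFin G) {x y : V} (h : G.Adj x y) :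
    0 < deg G x := by
  have hf : Finite (G.neighborSet x) := (hloc x).to_subtype
  have : Nonempty (G.neighborSet x) := ⟨⟨y, h⟩⟩
  exact Nat.card_pos

def ball (G : SimpleGraph V) (a : V) : ℕ → Set V
  | 0 => {a}
  | n + 1 => ball G a n ∪ ⋃ x ∈ ball G a n, G.neighborSet x

lemma ball_finite {G : SimpleGraph V} (hloc : LocFin G) (a : V) :
    ∀ n, (ball G a n).Finite
  | 0 => Set.finite_singleton a
  | n + 1 => ((ball_finite hloc a n).union
      ((ball_finite hloc a n).biUnion fun x _ => hloc x))

lemma ball_succ {G : SimpleGraph V} {a : V} {n : ℕ} :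
    ball G a n ⊆ ball G a (n + 1) := Set.subset_union_left

lemma ball_mono {G : SimpleGraph V} {a : V} {k n : ℕ} (h : k ≤ n) :
    ball G a k ⊆ ball G a n := by
  induction n with
  | zero => simpa [Nat.le_zero.mp h] using subset_rfl
  | succ n ih =>
      rcases Nat.lt_or_ge k (n+1) with h' | h'
      · exact (ih (by omega)).trans ball_succ
      · have : k = n + 1 := by omega
        subst this; exact subset_rfl

lemma mem_ball_of_adj {G : SimpleGraph V} {a x y : V} {n : ℕ}
    (hx : x ∈ ball G a n) (h : G.Adj x y) : y ∈ ball G a (n + 1) := by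
  exact Or.inr (Set.mem_biUnion hx h)

lemma ball_subset_ball {G : SimpleGraph V} {a u : V} {m : ℕ} (hu : u ∈ ball G a m) :
    ∀ n, ball G u n ⊆ ball G a (m + n)
  | 0 => by
      intro y hy
      rcases hy with rfl
      simpa using ball_mono (Nat.le_add_right m 0) hu
  | n + 1 => by
      intro y hy
      rcases hy with hy | hy
      · exact ball_mono (by omega) (ball_subset_ball hu n hy)
      · rcases Set.mem_iUnion₂.mp hy with ⟨x, hx, hxy⟩
        exact mem_ball_of_adj (ball_subset_ball hu n hx) hxy

lemma walk_mem_ball {G : SimpleGraph V} {t : ℕ} {p : Fin (t + 1) → V} {a : V}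
    (h0 : p 0 = a) (hadj : ∀ i : Fin t, G.Adj (p i.castSucc) (p i.succ)) :
    ∀ i : Fin (t + 1), p i ∈ ball G a t := by
  have key : ∀ i : Fin (t + 1), p i ∈ ball G a i := by
    intro i
    induction i using Fin.induction with
    | zero => simp [ball, h0]
    | succ i ih =>
        have h2 := mem_ball_of_adj ih (hadj i)
        simpa using h2
  intro i
  exact ball_mono (by have := i.isLt; omega) (key i)

lemma pathProb_adj {G : SimpleGraph V} {t : ℕ} {p : Fin (t + 1) → V}
    (h : pathProb G p ≠ 0) : ∀ i : Fin t, G.Adj (p i.castSucc) (p i.succ) := by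
  by_contra hc
  exact h (by simp [pathProb, hc])

lemma Ffun_ne_zero {G : SimpleGraph V} {a b v : V} {t : ℕ} {p : Fin (t + 1) → V}
    (h : Ffun G a b v t p ≠ 0) :
    (p 0 = a ∧ p (Fin.last t) = b ∧
      (∀ i : Fin (t + 1), i ≠ 0 → i ≠ Fin.last t → p i ≠ v)) ∧
      ∀ i : Fin t, G.Adj (p i.castSucc) (p i.succ) := by
  rw [Ffun] at h
  split at h
  · exact ⟨by assumption, pathProb_adj h⟩
  · exact absurd rfl h

lemma Ffun_mem_ball {G : SimpleGraph V} {a b v : V} {t : ℕ} {p : Fin (t + 1) → V}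
    (h : Ffun G a b v t p ≠ 0) (i : Fin (t + 1)) : p i ∈ ball G a t := by
  obtain ⟨⟨h0, -, -⟩, hadj⟩ := Ffun_ne_zero h
  exact walk_mem_ball h0 hadj i

lemma tsum_paths_eq_sum {t : ℕ} (f : (Fin (t + 1) → V) → ℝ) (B : Finset V)
    (hsupp : ∀ p, f p ≠ 0 → ∀ i, p i ∈ B) :
    ∑' p, f p = ∑ p ∈ Fintype.piFinset (fun _ : Fin (t + 1) => B), f p := by
  apply tsum_eq_sum
  intro p hp
  by_contra h
  exact hp (by rw [Fintype.mem_piFinset]; exact hsupp p h)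


lemma adj_rev_iff {G : SimpleGraph V} {s : ℕ} (p : Fin (s + 1) → V) :
    (∀ i : Fin s, G.Adj ((p ∘ Fin.rev) i.castSucc) ((p ∘ Fin.rev) i.succ)) ↔
    (∀ i : Fin s, G.Adj (p i.castSucc) (p i.succ)) := by
  constructor
  · intro h i
    have h2 := h i.rev
    simp only [Function.comp, Fin.rev_castSucc, Fin.rev_succ, Fin.rev_rev] at h2
    exact h2.symm
  · intro h i
    have h2 := h i.rev
    simp only [Function.comp, Fin.rev_castSucc, Fin.rev_succ]
    exact h2.symm

lemma pathProb_rev {G : SimpleGraph V} (hloc : LocFin G) {s : ℕ} (hs : 1 ≤ s)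
    (p : Fin (s + 1) → V) :
    pathProb G (p ∘ Fin.rev) =
      ((deg G (p 0) : ℝ) / (deg G (p (Fin.last s)) : ℝ)) * pathProb G p := by
  by_cases hadj : ∀ i : Fin s, G.Adj (p i.castSucc) (p i.succ)
  · -- degrees positive along the path
    have hdeg : ∀ j : Fin (s + 1), 0 < deg G (p j) := by
      intro j
      rcases Nat.lt_or_ge (j : ℕ) s with hj | hj
      · have : j = (⟨j, hj⟩ : Fin s).castSucc := by ext; simp
        rw [this]; exact deg_pos hloc (hadj ⟨j, hj⟩)
      · have hj' : (j : ℕ) = s := by have := j.isLt; omega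
        have : j = (⟨s - 1, by omega⟩ : Fin s).succ := by ext; simp; omega
        rw [this]; exact deg_pos hloc (hadj ⟨s - 1, by omega⟩).symm
    have hA : pathProb G (p ∘ Fin.rev) = ∏ i : Fin s, ((deg G (p i.succ) : ℝ))⁻¹ := by
      rw [pathProb, if_pos ((adj_rev_iff p).mpr hadj)]
      have : ∀ i : Fin s, (p ∘ Fin.rev) i.castSucc = p i.rev.succ := by
        intro i; simp [Function.comp, Fin.rev_castSucc]
      rw [Finset.prod_congr rfl fun i _ => by rw [this i]]
      exact Equiv.prod_comp Fin.revPerm (fun i => ((deg G (p i.succ) : ℝ))⁻¹)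
    have hB : pathProb G p = ∏ i : Fin s, ((deg G (p i.castSucc) : ℝ))⁻¹ := by
      rw [pathProb, if_pos hadj]
    set f : Fin (s + 1) → ℝ := fun j => ((deg G (p j) : ℝ))⁻¹ with hf
    have h1 : ∏ j, f j = f 0 * ∏ i : Fin s, f i.succ := Fin.prod_univ_succ f
    have h2 : ∏ j, f j = (∏ i : Fin s, f i.castSucc) * f (Fin.last s) :=
      Fin.prod_univ_castSucc f
    have hne : ∀ j, f j ≠ 0 := by
      intro j
      have := hdeg j
      simp [hf]
      positivity
    rw [hA, hB]
    have key : f 0 * ∏ i : Fin s, f i.succ = (∏ i : Fin s, f i.castSucc) * f (Fin.last s) := by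
      rw [← h1, ← h2]
    have h0 : (deg G (p 0) : ℝ) ≠ 0 := by
      have := hdeg 0; positivity
    have hl : (deg G (p (Fin.last s)) : ℝ) ≠ 0 := by
      have := hdeg (Fin.last s); positivity
    calc ∏ i : Fin s, f i.succ
        = (deg G (p 0) : ℝ) * (f 0 * ∏ i : Fin s, f i.succ) := by
          rw [← mul_assoc]
          have : (deg G (p 0) : ℝ) * f 0 = 1 := by
            simp only [hf]
            exact mul_inv_cancel₀ h0
          rw [this, one_mul]
      _ = (deg G (p 0) : ℝ) * ((∏ i : Fin s, f i.castSucc) * f (Fin.last s)) := by rw [key]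
      _ = ((deg G (p 0) : ℝ) / (deg G (p (Fin.last s)) : ℝ)) * ∏ i : Fin s, f i.castSucc := by
          simp only [hf]
          field_simp
  · have h1 : pathProb G (p ∘ Fin.rev) = 0 := by
      rw [pathProb, if_neg (by rw [adj_rev_iff]; exact hadj)]
    have h2 : pathProb G p = 0 := by rw [pathProb, if_neg hadj]
    rw [h1, h2, mul_zero]


lemma cond_rev_iff {s : ℕ} (v u : V) (p : Fin (s + 1) → V) :
    ((p ∘ Fin.rev) 0 = v ∧ (p ∘ Fin.rev) (Fin.last s) = u ∧
      (∀ i : Fin (s + 1), i ≠ 0 → i ≠ Fin.last s → (p ∘ Fin.rev) i ≠ v)) ↔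
    (p 0 = u ∧ p (Fin.last s) = v ∧
      (∀ i : Fin (s + 1), i ≠ 0 → i ≠ Fin.last s → p i ≠ v)) := by
  have e0 : (p ∘ Fin.rev) 0 = p (Fin.last s) := by
    simp [Function.comp, Fin.rev_zero]
  have el : (p ∘ Fin.rev) (Fin.last s) = p 0 := by
    simp [Function.comp, Fin.rev_last]
  rw [e0, el]
  have hrev : ∀ i : Fin (s + 1), i ≠ 0 → i ≠ Fin.last s → (i.rev ≠ 0 ∧ i.rev ≠ Fin.last s) := by
    intro i hi0 hil
    constructor
    · intro h
      apply hil
      have := congrArg Fin.rev h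
      rwa [Fin.rev_rev, Fin.rev_zero] at this
    · intro h
      apply hi0
      have := congrArg Fin.rev h
      rwa [Fin.rev_rev, Fin.rev_last] at this
  constructor
  · rintro ⟨h1, h2, h3⟩
    refine ⟨h2, h1, fun i hi0 hil => ?_⟩
    have h4 := h3 i.rev (hrev i hi0 hil).1 (hrev i hi0 hil).2
    simpa [Function.comp, Fin.rev_rev] using h4
  · rintro ⟨h1, h2, h3⟩
    refine ⟨h2, h1, fun i hi0 hil => ?_⟩
    exact h3 i.rev (hrev i hi0 hil).1 (hrev i hi0 hil).2

lemma Ffun_rev {G : SimpleGraph V} (hloc : LocFin G) {u v : V} {s : ℕ} (hs : 1 ≤ s)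
    (p : Fin (s + 1) → V) :
    Ffun G v u v s (p ∘ Fin.rev) = ((deg G u : ℝ) / (deg G v : ℝ)) * Ffun G u v v s p := by
  rw [Ffun, Ffun, if_congr (cond_rev_iff v u p) rfl rfl]
  by_cases hC : p 0 = u ∧ p (Fin.last s) = v ∧
      (∀ i : Fin (s + 1), i ≠ 0 → i ≠ Fin.last s → p i ≠ v)
  · rw [if_pos hC, if_pos hC, pathProb_rev hloc hs p, hC.1, hC.2.1]
  · rw [if_neg hC, if_neg hC, mul_zero]

/-- The reversal equivalence on path space. -/
def revEquiv (s : ℕ) : (Fin (s + 1) → V) ≃ (Fin (s + 1) → V) where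
  toFun p := p ∘ Fin.rev
  invFun p := p ∘ Fin.rev
  left_inv p := funext fun i => congrArg p (Fin.rev_rev i)
  right_inv p := funext fun i => congrArg p (Fin.rev_rev i)

lemma part1 {G : SimpleGraph V} (hloc : LocFin G) (v u : V) {s : ℕ} (hs : 1 ≤ s) :
    visitProb G v u s = ((deg G u : ℝ) / (deg G v : ℝ)) * hitProb G u v s := by
  have hv : visitProb G v u s = ∑' p : Fin (s + 1) → V, Ffun G v u v s p := rfl
  have hh : hitProb G u v s = ∑' p : Fin (s + 1) → V, Ffun G u v v s p := rfl
  rw [hv, hh, ← Equiv.tsum_eq (revEquiv s) (Ffun G v u v s), ← tsum_mul_left]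
  exact tsum_congr fun p => Ffun_rev hloc hs p

def fst' (m n : ℕ) (p : Fin (m + n + 1) → V) : Fin (m + 1) → V :=
  fun i => p ⟨i, by have := i.isLt; omega⟩
def snd' (m n : ℕ) (p : Fin (m + n + 1) → V) : Fin (n + 1) → V :=
  fun j => p ⟨m + j, by have := j.isLt; omega⟩
def glue (m n : ℕ) (q : Fin (m + 1) → V) (r : Fin (n + 1) → V) : Fin (m + n + 1) → V :=
  fun i => if h : (i : ℕ) ≤ m then q ⟨i, by omega⟩
           else r ⟨(i : ℕ) - m, by have := i.isLt; omega⟩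

noncomputable def Kfun (G : SimpleGraph V) (v : V) (m n : ℕ)
    (q : Fin (m + 1) → V) (r : Fin (n + 1) → V) : ℝ :=
  if (q 0 = v ∧ (∀ i, i ≠ 0 → i ≠ Fin.last m → q i ≠ v) ∧ q (Fin.last m) ≠ v)
      ∧ (r 0 = q (Fin.last m) ∧ r (Fin.last n) = v ∧
          (∀ j, j ≠ 0 → j ≠ Fin.last n → r j ≠ v))
  then pathProb G q * pathProb G r else 0

lemma adj_split {G : SimpleGraph V} {m n : ℕ} (p : Fin (m + n + 1) → V) :
    (∀ i : Fin (m + n), G.Adj (p i.castSucc) (p i.succ)) ↔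
    ((∀ i : Fin m, G.Adj ((fst' m n p) i.castSucc) ((fst' m n p) i.succ)) ∧
     (∀ j : Fin n, G.Adj ((snd' m n p) j.castSucc) ((snd' m n p) j.succ))) := by
  constructor
  · intro h
    exact ⟨fun i => h ⟨(i : ℕ), by have := i.isLt; omega⟩,
           fun j => h ⟨m + (j : ℕ), by have := j.isLt; omega⟩⟩
  · rintro ⟨hq, hr⟩ i
    rcases Nat.lt_or_ge (i : ℕ) m with hi | hi
    · have e1 : i.castSucc = (⟨(i : ℕ), by have := i.isLt; omega⟩ : Fin (m + n + 1)) :=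
        Fin.ext (by simp)
      have e2 : i.succ = (⟨(i : ℕ) + 1, by have := i.isLt; omega⟩ : Fin (m + n + 1)) :=
        Fin.ext (by simp)
      rw [e1, e2]
      exact hq ⟨(i : ℕ), hi⟩
    · have e1 : i.castSucc = (⟨m + ((i : ℕ) - m), by have := i.isLt; omega⟩ :
          Fin (m + n + 1)) := Fin.ext (by simp; omega)
      have e2 : i.succ = (⟨m + ((i : ℕ) - m) + 1, by have := i.isLt; omega⟩ :
          Fin (m + n + 1)) := Fin.ext (by simp; omega)
      rw [e1, e2]
      exact hr ⟨(i : ℕ) - m, by have := i.isLt; omega⟩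

lemma pathProb_split {G : SimpleGraph V} {m n : ℕ} (p : Fin (m + n + 1) → V) :
    pathProb G p = pathProb G (fst' m n p) * pathProb G (snd' m n p) := by
  by_cases h : ∀ i : Fin (m + n), G.Adj (p i.castSucc) (p i.succ)
  · obtain ⟨hq, hr⟩ := (adj_split p).mp h
    rw [pathProb, pathProb, pathProb, if_pos h, if_pos hq, if_pos hr]
    rw [Fin.prod_univ_add (fun i : Fin (m + n) => ((deg G (p i.castSucc) : ℝ))⁻¹)]
    rfl

  · rw [pathProb, if_neg h]
    rcases (not_and_or.mp (fun hc => h ((adj_split p).mpr hc))) with hc | hc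
    · rw [show pathProb G (fst' m n p) = 0 from by rw [pathProb, if_neg hc], zero_mul]
    · rw [show pathProb G (snd' m n p) = 0 from by rw [pathProb, if_neg hc], mul_zero]

lemma cond_split {m n : ℕ} (hm : 1 ≤ m) (hn : 1 ≤ n) (v : V)
    (p : Fin (m + n + 1) → V) :
    (p 0 = v ∧ p (Fin.last (m + n)) = v ∧
      (∀ i : Fin (m + n + 1), i ≠ 0 → i ≠ Fin.last (m + n) → p i ≠ v)) ↔
    (((fst' m n p) 0 = v ∧
        (∀ i, i ≠ 0 → i ≠ Fin.last m → (fst' m n p) i ≠ v) ∧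
        (fst' m n p) (Fin.last m) ≠ v) ∧
      ((snd' m n p) 0 = (fst' m n p) (Fin.last m) ∧
        (snd' m n p) (Fin.last n) = v ∧
        (∀ j, j ≠ 0 → j ≠ Fin.last n → (snd' m n p) j ≠ v))) := by
  have hq0 : fst' m n p 0 = p 0 := congrArg p (Fin.ext (by simp [fst']))
  have hql : fst' m n p (Fin.last m) = p ⟨m, by omega⟩ :=
    congrArg p (Fin.ext (by simp [fst']))
  have hr0 : snd' m n p 0 = p ⟨m, by omega⟩ := congrArg p (Fin.ext (by simp [snd']))
  have hrl : snd' m n p (Fin.last n) = p (Fin.last (m + n)) :=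
    congrArg p (Fin.ext (by simp [snd']))
  constructor
  · rintro ⟨h0, hl, hint⟩
    have hmid : p ⟨m, by omega⟩ ≠ v := by
      apply hint ⟨m, by omega⟩
      · exact Fin.ne_of_val_ne (by simp; omega)
      · exact Fin.ne_of_val_ne (by simp; omega)
    refine ⟨⟨hq0.trans h0, ?_, hql ▸ hmid⟩,
            hr0.trans hql.symm, hrl.trans hl, ?_⟩
    · intro i hi0 hil
      have hi0' : (i : ℕ) ≠ 0 := fun h => hi0 (Fin.ext (by simpa using h))
      have hil' : (i : ℕ) ≠ m := fun h => hil (Fin.ext (by simpa using h))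
      have := i.isLt
      apply hint ⟨(i : ℕ), by omega⟩
      · exact Fin.ne_of_val_ne (by simpa using hi0')
      · exact Fin.ne_of_val_ne (by simp; omega)
    · intro j hj0 hjl
      have hj0' : (j : ℕ) ≠ 0 := fun h => hj0 (Fin.ext (by simpa using h))
      have hjl' : (j : ℕ) ≠ n := fun h => hjl (Fin.ext (by simpa using h))
      have := j.isLt
      apply hint ⟨m + (j : ℕ), by omega⟩
      · exact Fin.ne_of_val_ne (by simp; omega)
      · exact Fin.ne_of_val_ne (by simp; omega)
  · rintro ⟨⟨h0, hintq, hmid⟩, -, hl, hintr⟩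
    refine ⟨hq0 ▸ h0, hrl ▸ hl, ?_⟩
    intro i hi0 hil
    have hi0' : (i : ℕ) ≠ 0 := fun h => hi0 (Fin.ext (by simpa using h))
    have hil' : (i : ℕ) ≠ m + n := fun h => hil (Fin.ext (by simpa using h))
    have hisLt := i.isLt
    rcases Nat.lt_or_ge (i : ℕ) m with hi | hi
    · have e : p i = fst' m n p ⟨(i : ℕ), by omega⟩ :=
        congrArg p (Fin.ext (by simp [fst']))
      rw [e]
      apply hintq
      · exact Fin.ne_of_val_ne (by simpa using hi0')
      · exact Fin.ne_of_val_ne (by simp; omega)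
    · rcases Nat.eq_or_lt_of_le hi with he | hi'
      · have e : p i = fst' m n p (Fin.last m) := by
          rw [hql]; exact congrArg p (Fin.ext (by simp; omega))
        rw [e]; exact hmid
      · have e : p i = snd' m n p ⟨(i : ℕ) - m, by omega⟩ :=
          congrArg p (Fin.ext (by simp [snd']; omega))
        rw [e]
        apply hintr
        · exact Fin.ne_of_val_ne (by simp; omega)
        · exact Fin.ne_of_val_ne (by simp; omega)

lemma Ffun_split {G : SimpleGraph V} (v : V) {m n : ℕ} (hm : 1 ≤ m) (hn : 1 ≤ n)
    (p : Fin (m + n + 1) → V) :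
    Ffun G v v v (m + n) p = Kfun G v m n (fst' m n p) (snd' m n p) := by
  rw [Ffun, Kfun]
  exact if_congr (cond_split hm hn v p) (pathProb_split p) rfl

lemma glue_fst_snd {m n : ℕ} (p : Fin (m + n + 1) → V) :
    glue m n (fst' m n p) (snd' m n p) = p := by
  funext i
  rw [glue]
  split
  · exact congrArg p (Fin.ext (by simp [fst']))
  · exact congrArg p (Fin.ext (by simp [snd']; omega))

lemma fst_glue {m n : ℕ} (q : Fin (m + 1) → V) (r : Fin (n + 1) → V) :
    fst' m n (glue m n q r) = q := by
  funext i
  have hi := i.isLt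
  rw [fst', glue]
  dsimp only
  rw [dif_pos (by first | (simp; omega) | simp | omega)]

lemma snd_glue {m n : ℕ} (q : Fin (m + 1) → V) (r : Fin (n + 1) → V)
    (h : r 0 = q (Fin.last m)) : snd' m n (glue m n q r) = r := by
  funext j
  have hj := j.isLt
  rw [snd', glue]
  dsimp only
  rcases Nat.eq_or_lt_of_le (Nat.zero_le (j : ℕ)) with hj0 | hj0
  · rw [dif_pos (by first | (simp; exact Fin.ext hj0.symm) | (simp; omega) | simp | omega)]
    have e : q ⟨m + (j : ℕ), by omega⟩ = q (Fin.last m) := by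
      exact congrArg q (Fin.ext (by first | (simp; exact Fin.ext hj0.symm) | (simp; omega) | simp | omega))
    rw [e, ← h]
    exact congrArg r (Fin.ext (by first | (simp; omega) | simp | omega))
  · rw [dif_neg (by first | (simp; exact fun hc => by simp [hc] at hj0) | (simp; omega) | simp | omega)]
    exact congrArg r (Fin.ext (by first | (simp; omega) | simp | omega))


lemma Kfun_cond {G : SimpleGraph V} {v : V} {m n : ℕ}
    {q : Fin (m + 1) → V} {r : Fin (n + 1) → V} (h : Kfun G v m n q r ≠ 0) :
    (q 0 = v ∧ (∀ i, i ≠ 0 → i ≠ Fin.last m → q i ≠ v) ∧ q (Fin.last m) ≠ v)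
      ∧ (r 0 = q (Fin.last m) ∧ r (Fin.last n) = v ∧
          (∀ j, j ≠ 0 → j ≠ Fin.last n → r j ≠ v)) := by
  rw [Kfun] at h
  split at h
  · assumption
  · exact absurd rfl h

lemma u_collapse {G : SimpleGraph V} (hloc : LocFin G) (v : V) {m n : ℕ}
    (U : Finset V) (hU : ∀ x, x ∈ U ↔ x ∈ ball G v m)
    (q : Fin (m + 1) → V) (r : Fin (n + 1) → V) :
    ∑ u ∈ U.erase v, Ffun G v u v m q * Ffun G u v v n r = Kfun G v m n q r := by
  by_cases hw : q (Fin.last m) ∈ U.erase v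
  · rw [Finset.sum_eq_single_of_mem (q (Fin.last m)) hw ?other]
    case other =>
      intro b _ hb
      rw [Ffun, if_neg (fun hc => hb hc.2.1.symm), zero_mul]
    have hwv : q (Fin.last m) ≠ v := (Finset.mem_erase.mp hw).1
    rw [Ffun, Ffun, Kfun, ite_zero_mul_ite_zero]
    apply if_congr _ rfl rfl
    constructor
    · rintro ⟨⟨a1, -, a3⟩, b1, b2, b3⟩
      exact ⟨⟨a1, a3, hwv⟩, b1, b2, b3⟩
    · rintro ⟨⟨a1, a3, -⟩, b1, b2, b3⟩
      exact ⟨⟨a1, rfl, a3⟩, b1, b2, b3⟩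
  · rw [Finset.sum_eq_zero ?hz]
    case hz =>
      intro u hu
      by_cases he : Ffun G v u v m q = 0
      · rw [he, zero_mul]
      · exfalso
        obtain ⟨⟨-, hl, -⟩, -⟩ := Ffun_ne_zero he
        exact hw (hl ▸ hu)
    by_cases hc : Kfun G v m n q r = 0
    · rw [hc]
    · exfalso
      obtain ⟨⟨h0, -, hlv⟩, -⟩ := Kfun_cond hc
      have hpq : pathProb G q ≠ 0 := by
        intro hz
        apply hc
        rw [Kfun]
        split
        · rw [hz, zero_mul]
        · rfl
      have hadj := pathProb_adj hpq
      have hmem : q (Fin.last m) ∈ ball G v m := walk_mem_ball h0 hadj (Fin.last m)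
      exact hw (Finset.mem_erase.mpr ⟨hlv, (hU _).mpr hmem⟩)

lemma sum_K_eq {G : SimpleGraph V} (v : V) {m n : ℕ} (hm : 1 ≤ m) (hn : 1 ≤ n)
    (B : Finset V) :
    ∑ p ∈ Fintype.piFinset (fun _ : Fin (m + n + 1) => B), Ffun G v v v (m + n) p
    = ∑ q ∈ Fintype.piFinset (fun _ : Fin (m + 1) => B),
        ∑ r ∈ Fintype.piFinset (fun _ : Fin (n + 1) => B), Kfun G v m n q r := by
  rw [← Finset.sum_product' (f := fun q r => Kfun G v m n q r)]
  rw [← Finset.sum_filter_ne_zero (Fintype.piFinset (fun _ : Fin (m + n + 1) => B))]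
  rw [← Finset.sum_filter_ne_zero ((Fintype.piFinset (fun _ : Fin (m + 1) => B)) ×ˢ
        (Fintype.piFinset (fun _ : Fin (n + 1) => B)))]
  refine Finset.sum_nbij' (fun p => (fst' m n p, snd' m n p))
    (fun qr => glue m n qr.1 qr.2) ?_ ?_ ?_ ?_ ?_
  · intro p hp
    obtain ⟨hpB, hpne⟩ := Finset.mem_filter.mp hp
    rw [Fintype.mem_piFinset] at hpB
    refine Finset.mem_filter.mpr ⟨Finset.mem_product.mpr ⟨?_, ?_⟩, ?_⟩
    · rw [Fintype.mem_piFinset]; intro i; exact hpB _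
    · rw [Fintype.mem_piFinset]; intro j; exact hpB _
    · rw [← Ffun_split v hm hn p]; exact hpne
  · rintro ⟨q, r⟩ hqr
    obtain ⟨hqrB, hne⟩ := Finset.mem_filter.mp hqr
    obtain ⟨hqB, hrB⟩ := Finset.mem_product.mp hqrB
    rw [Fintype.mem_piFinset] at hqB hrB
    have hr0 : r 0 = q (Fin.last m) := (Kfun_cond hne).2.1
    refine Finset.mem_filter.mpr ⟨?_, ?_⟩
    · rw [Fintype.mem_piFinset]
      intro i
      simp only [glue]
      split
      · exact hqB _
      · exact hrB _
    · rw [Ffun_split v hm hn, fst_glue, snd_glue q r hr0]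
      exact hne
  · intro p _
    exact glue_fst_snd p
  · rintro ⟨q, r⟩ hqr
    obtain ⟨-, hne⟩ := Finset.mem_filter.mp hqr
    have hr0 : r 0 = q (Fin.last m) := (Kfun_cond hne).2.1
    exact Prod.ext (fst_glue q r) (snd_glue q r hr0)
  · intro p _
    exact Ffun_split v hm hn p

lemma split_lemma {G : SimpleGraph V} (hloc : LocFin G) (v : V) {m n : ℕ}
    (hm : 1 ≤ m) (hn : 1 ≤ n) :
    hitProb G v v (m + n) =
      ∑' u : V, if u = v then 0 else visitProb G v u m * hitProb G u v n := by
  set B : Finset V := (ball_finite hloc v (m + n)).toFinset with hBdef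
  have hBmem : ∀ x, x ∈ ball G v (m + n) → x ∈ B := fun x hx =>
    (Set.Finite.mem_toFinset _).mpr hx
  set U : Finset V := (ball_finite hloc v m).toFinset with hUdef
  have hUmem : ∀ x, x ∈ U ↔ x ∈ ball G v m := fun x => Set.Finite.mem_toFinset _
  have hLHS : hitProb G v v (m + n) =
      ∑ p ∈ Fintype.piFinset (fun _ : Fin (m + n + 1) => B), Ffun G v v v (m + n) p := by
    have h : hitProb G v v (m + n) = ∑' p, Ffun G v v v (m + n) p := rfl
    rw [h]
    exact tsum_paths_eq_sum _ B (fun p h i => hBmem _ (Ffun_mem_ball h i))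
  have hRHSfin : (∑' u : V, if u = v then 0 else visitProb G v u m * hitProb G u v n)
      = ∑ u ∈ U, if u = v then 0 else visitProb G v u m * hitProb G u v n := by
    apply tsum_eq_sum
    intro u hu
    by_cases huv : u = v
    · simp [huv]
    · rw [if_neg huv]
      have hvz : visitProb G v u m = 0 := by
        have hall : ∀ p : Fin (m + 1) → V, Ffun G v u v m p = 0 := by
          intro p
          by_contra h
          obtain ⟨⟨h0, hl, -⟩, hadj⟩ := Ffun_ne_zero h
          exact hu ((hUmem u).mpr (hl ▸ walk_mem_ball h0 hadj (Fin.last m)))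
        have h : visitProb G v u m = ∑' p, Ffun G v u v m p := rfl
        rw [h, tsum_congr hall]
        exact tsum_zero
      rw [hvz, zero_mul]
  rw [hLHS, hRHSfin]
  rw [← Finset.sum_erase U
    (by simp : (if v = v then (0:ℝ) else visitProb G v v m * hitProb G v v n) = 0)]
  rw [Finset.sum_congr rfl (fun u hu => if_neg (Finset.ne_of_mem_erase hu))]
  have hinner : ∀ u ∈ U.erase v, visitProb G v u m * hitProb G u v n
      = ∑ q ∈ Fintype.piFinset (fun _ : Fin (m + 1) => B),
          ∑ r ∈ Fintype.piFinset (fun _ : Fin (n + 1) => B),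
            Ffun G v u v m q * Ffun G u v v n r := by
    intro u hu
    have hu' : u ∈ ball G v m := (hUmem u).mp (Finset.mem_of_mem_erase hu)
    have h1 : visitProb G v u m =
        ∑ q ∈ Fintype.piFinset (fun _ : Fin (m + 1) => B), Ffun G v u v m q := by
      have h : visitProb G v u m = ∑' q, Ffun G v u v m q := rfl
      rw [h]
      exact tsum_paths_eq_sum _ B (fun q hq i =>
        hBmem _ (ball_mono (by omega) (Ffun_mem_ball hq i)))
    have h2 : hitProb G u v n =
        ∑ r ∈ Fintype.piFinset (fun _ : Fin (n + 1) => B), Ffun G u v v n r := by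
      have h : hitProb G u v n = ∑' r, Ffun G u v v n r := rfl
      rw [h]
      exact tsum_paths_eq_sum _ B (fun r hr i =>
        hBmem _ (ball_subset_ball hu' n (Ffun_mem_ball hr i)))
    rw [h1, h2, Finset.sum_mul_sum]
  rw [Finset.sum_congr rfl hinner, Finset.sum_comm]
  rw [Finset.sum_congr rfl (fun q _ => Finset.sum_comm)]
  rw [sum_K_eq v hm hn B]
  exact Finset.sum_congr rfl fun q _ => Finset.sum_congr rfl fun r _ =>
    (u_collapse hloc v U hUmem q r).symm

/-- Reversibility: `P_v(X_s = u, τ_v ≥ s) = (d_u/d_v) P_u(τ_v = s)`, and consequently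
`P_v(τ_v = t) = (1/d_v) ∑_{u ≠ v} d_u P_u(τ_v = ⌈t/2⌉) P_u(τ_v = ⌊t/2⌋)`. -/
theorem reversibility_return_identity {V : Type} (G : SimpleGraph V) (hloc : LocFin G)
    (hconn : G.Connected) (v : V) :
    (∀ u : V, u ≠ v → ∀ s : ℕ, 1 ≤ s →
        visitProb G v u s = ((deg G u : ℝ) / (deg G v : ℝ)) * hitProb G u v s) ∧
    (∀ t : ℕ, 2 ≤ t →
        hitProb G v v t = ((deg G v : ℝ))⁻¹ *
          ∑' u : V, (if u = v then 0 else
            (deg G u : ℝ) * hitProb G u v ((t + 1) / 2) * hitProb G u v (t / 2))) := by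
  constructor
  · intro u hu s hs
    exact part1 hloc v u hs
  · intro t ht
    set m : ℕ := (t + 1) / 2 with hmdef
    set n : ℕ := t / 2 with hndef
    have hm : 1 ≤ m := by omega
    have hn : 1 ≤ n := by omega
    have hmn : m + n = t := by omega
    by_cases hdv : deg G v = 0
    · -- degenerate: v has no neighbors
      have hhit : hitProb G v v t = 0 := by
        have hall : ∀ p : Fin (t + 1) → V, Ffun G v v v t p = 0 := by
          intro p
          by_contra h
          obtain ⟨⟨h0, -, -⟩, hadj⟩ := Ffun_ne_zero h
          have hadj0 := hadj ⟨0, by omega⟩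
          have e : ((⟨0, by omega⟩ : Fin t).castSucc) = (0 : Fin (t + 1)) :=
            Fin.ext (by simp)
          rw [e, h0] at hadj0
          exact absurd (deg_pos hloc hadj0) (by omega)
        have h : hitProb G v v t = ∑' p, Ffun G v v v t p := rfl
        rw [h, tsum_congr hall]
        exact tsum_zero
      rw [hhit, hdv]
      simp
    · have hdv' : (deg G v : ℝ) ≠ 0 := Nat.cast_ne_zero.mpr hdv
      have hsplit := split_lemma hloc v hm hn
      rw [hmn] at hsplit
      rw [hsplit, ← tsum_mul_left]
      apply tsum_congr
      intro u
      by_cases huv : u = v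
      · rw [if_pos huv, if_pos huv, mul_zero]
      · rw [if_neg huv, if_neg huv, part1 hloc v u hm]
        field_simp

end RW
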